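/- Let F be a non-archimedean local field of characteristic ≠ 2, n ≥ 1, and M an integral O_F-lattice. Then M is n-ADC if and only if for every O_F-maximal lattice N of rank n such that F·M represents F·N, M represents N. -/

import Mathlib

/-
Quadratic lattices over (local and global) fields, following
"On n-ADC integral quadratic lattices over totally real number fields".

A non-archimedean local field of characteristic ≠ 2 is formalized as a field `K`
together with a valuation subring `O` of `K` which is a complete discrete valuation
ring with finite residue field (completeness is expressed as adic completeness with
respect to the maximal ideal); `K` is automatically the fraction field of `O`.
-/

noncomputable section

namespace QLat

variable {K : Type} [Field K]

/-- The bilinear form associated to a quadratic form `Q`, i.e. `B x y = (Q(x+y)-Q(x)-Q(y))/2`,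
so that `B x x = Q x`. -/
def bil {V : Type} [AddCommGroup V] [Module K V] (Q : QuadraticForm K V) (x y : V) : K :=
  (2 : K)⁻¹ * QuadraticMap.polar (⇑Q) x y

/-- A quadratic form (space) is nondegenerate. -/
def Nondeg {V : Type} [AddCommGroup V] [Module K V] (Q : QuadraticForm K V) : Prop :=
  ∀ x : V, (∀ y : V, QuadraticMap.polar (⇑Q) x y = 0) → x = 0

/-- The `O`-span of a subset `t` of a `K`-vector space: all finite `O`-linear
combinations of elements of `t`. -/
def ospan (O : Subring K) {V : Type} [AddCommGroup V] [Module K V] (t : Set V) : Set V :=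
  {x | ∃ (m : ℕ) (c : Fin m → K) (g : Fin m → V),
    (∀ i, c i ∈ O) ∧ (∀ i, g i ∈ t) ∧ x = ∑ i, c i • g i}

/-- An `O`-lattice in `V`: a finitely generated `O`-submodule of `V`. -/
def IsLattice (O : Subring K) {V : Type} [AddCommGroup V] [Module K V] (L : Set V) : Prop :=
  ∃ t : Finset V, L = ospan O (t : Set V)

/-- An `O`-lattice on `V`: a finitely generated `O`-submodule of `V` spanning `V` over `K`. -/
def IsLatticeOn (O : Subring K) {V : Type} [AddCommGroup V] [Module K V] (L : Set V) : Prop :=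
  IsLattice O L ∧ Submodule.span K L = ⊤

/-- The lattice `L` is integral: `𝔫(L) ⊆ O`, i.e. all values of `Q` on `L` lie in `O`. -/
def IsIntegral (O : Subring K) {V : Type} [AddCommGroup V] [Module K V]
    (Q : QuadraticForm K V) (L : Set V) : Prop :=
  ∀ x ∈ L, Q x ∈ O

/-- The quadratic space `(V,Q)` represents the quadratic space `(W,Q')`. -/
def SpaceRep {W V : Type} [AddCommGroup W] [Module K W] [AddCommGroup V] [Module K V]
    (Q' : QuadraticForm K W) (Q : QuadraticForm K V) : Prop :=
  ∃ σ : W →ₗ[K] V, Function.Injective σ ∧ ∀ x, Q (σ x) = Q' x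

/-- The quadratic spaces `(W,Q')` and `(V,Q)` are isometric. -/
def SpaceIsom {W V : Type} [AddCommGroup W] [Module K W] [AddCommGroup V] [Module K V]
    (Q' : QuadraticForm K W) (Q : QuadraticForm K V) : Prop :=
  ∃ σ : W ≃ₗ[K] V, ∀ x, Q (σ x) = Q' x

/-- The lattice `M` (in `(V,Q)`) represents the lattice `N` (a full lattice in `(W,Q')`):
there is an injective form-preserving `K`-linear map carrying `N` into `M`.  (For a full
lattice `N` this is equivalent to the existence of an injective form-preserving
`O`-linear map `N → M`, since `K` is the fraction field of `O`.) -/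
def LatRep {W V : Type} [AddCommGroup W] [Module K W] [AddCommGroup V] [Module K V]
    (Q' : QuadraticForm K W) (Q : QuadraticForm K V) (N : Set W) (M : Set V) : Prop :=
  ∃ σ : W →ₗ[K] V, Function.Injective σ ∧ (∀ x, Q (σ x) = Q' x) ∧ σ '' N ⊆ M

/-- The lattices `N` (full in `(W,Q')`) and `M` (in `(V,Q)`) are isometric. -/
def LatIsom {W V : Type} [AddCommGroup W] [Module K W] [AddCommGroup V] [Module K V]
    (Q' : QuadraticForm K W) (Q : QuadraticForm K V) (N : Set W) (M : Set V) : Prop :=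
  ∃ σ : W →ₗ[K] V, Function.Injective σ ∧ (∀ x, Q (σ x) = Q' x) ∧ σ '' N = M

/-- The lattice `L` is `O`-maximal: it is integral and is not properly contained in any
(finitely generated) lattice on the same subspace with integral norm. -/
def IsMaximal (O : Subring K) {V : Type} [AddCommGroup V] [Module K V]
    (Q : QuadraticForm K V) (L : Set V) : Prop :=
  IsIntegral O Q L ∧
    ∀ L' : Set V, IsLattice O L' → Submodule.span K L' = Submodule.span K L →
      L ⊆ L' → IsIntegral O Q L' → L' = L

/-- The lattice `L` is `n`-ADC: every integral `O`-lattice `N` of rank `n` (on a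
nondegenerate quadratic space `W` of dimension `n`) whose ambient space is represented by
the space `(V,Q) = K·L` is represented by `L`. -/
def IsADC (O : Subring K) {V : Type} [AddCommGroup V] [Module K V]
    (Q : QuadraticForm K V) (L : Set V) (n : ℕ) : Prop :=
  ∀ (W : Type) [AddCommGroup W] [Module K W] (Q' : QuadraticForm K W),
    Nondeg Q' → Module.finrank K W = n →
    ∀ N : Set W, IsLatticeOn O N → IsIntegral O Q' N →
      SpaceRep Q' Q → LatRep Q' Q N L

/-- The lattice `L` is `n`-universal: it represents every integral `O`-lattice of rank `n`. -/
def IsUniversal (O : Subring K) {V : Type} [AddCommGroup V] [Module K V]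
    (Q : QuadraticForm K V) (L : Set V) (n : ℕ) : Prop :=
  ∀ (W : Type) [AddCommGroup W] [Module K W] (Q' : QuadraticForm K W),
    Nondeg Q' → Module.finrank K W = n →
    ∀ N : Set W, IsLatticeOn O N → IsIntegral O Q' N → LatRep Q' Q N L


/-! ### Auxiliary lemmas -/

section Aux

variable (O : Subring K) {V : Type} [AddCommGroup V] [Module K V]

/-- The `O`-span, as a genuine `O`-submodule of `V`. -/
def ospanSubmodule (s : Set V) : Submodule O V where
  carrier := ospan O s
  zero_mem' := ⟨0, Fin.elim0, Fin.elim0, fun i => i.elim0, fun i => i.elim0, by simp⟩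
  add_mem' := by
    rintro x y ⟨m, c, g, hc, hg, rfl⟩ ⟨m', c', g', hc', hg', rfl⟩
    refine ⟨m + m', Fin.addCases c c', Fin.addCases g g', ?_, ?_, ?_⟩
    · exact fun i => Fin.addCases (motive := fun i => Fin.addCases c c' i ∈ O)
        (fun j => by simpa using hc j) (fun j => by simpa using hc' j) i
    · exact fun i => Fin.addCases (motive := fun i => Fin.addCases g g' i ∈ s)
        (fun j => by simpa using hg j) (fun j => by simpa using hg' j) i
    · rw [Fin.sum_univ_add]
      simp
  smul_mem' := by
    rintro a x ⟨m, c, g, hc, hg, rfl⟩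
    refine ⟨m, fun i => (a : K) * c i, g, fun i => O.mul_mem a.2 (hc i), hg, ?_⟩
    rw [Finset.smul_sum]
    refine Finset.sum_congr rfl fun i _ => ?_
    rw [← smul_smul]
    rfl

lemma ospan_eq_span (s : Set V) : ospan O s = ↑(Submodule.span O s) := by
  apply Set.Subset.antisymm
  · rintro x ⟨m, c, g, hc, hg, rfl⟩
    exact Submodule.sum_mem _ fun i _ =>
      Submodule.smul_mem _ (⟨c i, hc i⟩ : O) (Submodule.subset_span (hg i))
  · have : Submodule.span O s ≤ ospanSubmodule O s := by
      apply Submodule.span_le.2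
      intro v hv
      exact ⟨1, fun _ => 1, fun _ => v, fun _ => O.one_mem, fun _ => hv, by simp⟩
    exact this

lemma ospan_subset_spanK (s : Set V) : ospan O s ⊆ ↑(Submodule.span K s) := by
  rintro x ⟨m, c, g, hc, hg, rfl⟩
  exact Submodule.sum_mem _ fun i _ =>
    Submodule.smul_mem _ (c i) (Submodule.subset_span (hg i))

/-- Any integral lattice on a nondegenerate quadratic space over the fraction field of a
noetherian domain `O` is contained in an `O`-maximal lattice on the same space. -/
lemma exists_maximal_superlattice [IsNoetherianRing O]
    {W : Type} [AddCommGroup W] [Module K W] (Q' : QuadraticForm K W)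
    (hQ' : Nondeg Q') {N : Set W} (hN : IsLatticeOn O N) (hNint : IsIntegral O Q' N) :
    ∃ L' : Set W, IsLatticeOn O L' ∧ IsMaximal O Q' L' ∧ N ⊆ L' := by
  obtain ⟨⟨t, hNt⟩, hNspan⟩ := hN
  set P : Submodule O W := Submodule.span O (↑t : Set W) with hP
  have hNP : N = ↑P := by rw [hNt, ospan_eq_span]
  have htN : (↑t : Set W) ⊆ N := by rw [hNP]; exact Submodule.subset_span
  have hPint : IsIntegral O Q' (↑P : Set W) := hNP ▸ hNint
  -- the bounding lattice `D`
  set D : Submodule O W :=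
    { carrier := {x | ∀ y ∈ t, QuadraticMap.polar (⇑Q') x y ∈ O}
      zero_mem' := fun y _ => by simpa [QuadraticMap.polar] using O.zero_mem
      add_mem' := by
        intro a b ha hb y hy
        rw [QuadraticMap.polar_add_left]
        exact O.add_mem (ha y hy) (hb y hy)
      smul_mem' := by
        intro a x hx y hy
        have h1 : (a • x : W) = (a : K) • x := rfl
        rw [h1, QuadraticMap.polar_smul_left, smul_eq_mul]
        exact O.mul_mem a.2 (hx y hy) } with hD
  have hmemD : ∀ x : W, x ∈ D ↔ ∀ y ∈ t, QuadraticMap.polar (⇑Q') x y ∈ O := fun _ => Iff.rfl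
  -- any integral sublattice containing `P` is contained in `D`
  have hsubD : ∀ p : Submodule O W, P ≤ p → IsIntegral O Q' ↑p → p ≤ D := by
    intro p hPp hint x hx
    rw [hmemD]
    intro y hy
    have hyp : y ∈ p := hPp (by rw [← SetLike.mem_coe, ← hNP]; exact htN hy)
    have h1 : Q' (x + y) ∈ O := hint _ (p.add_mem hx hyp)
    have h2 : Q' x ∈ O := hint _ hx
    have h3 : Q' y ∈ O := hint _ hyp
    show Q' (x + y) - Q' x - Q' y ∈ O
    exact O.sub_mem (O.sub_mem h1 h2) h3
  have hPD : P ≤ D := hsubD P le_rfl hPint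
  -- `D` is a noetherian `O`-module
  let ψ : ↥D →ₗ[O] ({y // y ∈ t} → O) :=
    { toFun := fun x y => ⟨QuadraticMap.polar (⇑Q') (x : W) (y : W),
        ((hmemD (x : W)).1 x.2) y y.2⟩
      map_add' := by
        intro a b
        funext y
        apply Subtype.ext
        show QuadraticMap.polar (⇑Q') ((a : W) + (b : W)) (y : W) = _
        rw [QuadraticMap.polar_add_left]
        rfl
      map_smul' := by
        intro a x
        funext y
        apply Subtype.ext
        show QuadraticMap.polar (⇑Q') ((a : K) • (x : W)) (y : W) = _
        rw [QuadraticMap.polar_smul_left, smul_eq_mul]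
        rfl }
  have hinj : Function.Injective ψ := by
    intro x₁ x₂ hx
    have hzero : ∀ y ∈ t, QuadraticMap.polar (⇑Q') ((x₁ : W) - (x₂ : W)) y = 0 := by
      intro y hy
      have := congrFun hx ⟨y, hy⟩
      have h2 : QuadraticMap.polar (⇑Q') (x₁ : W) y = QuadraticMap.polar (⇑Q') (x₂ : W) y :=
        Subtype.ext_iff.1 this
      rw [sub_eq_add_neg, QuadraticMap.polar_add_left, QuadraticMap.polar_neg_left, h2]
      ring
    set Z : Submodule K W :=
      { carrier := {z | QuadraticMap.polar (⇑Q') ((x₁ : W) - (x₂ : W)) z = 0}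
        zero_mem' := by simp [QuadraticMap.polar]
        add_mem' := by
          intro a b ha hb
          rw [Set.mem_setOf_eq] at ha hb ⊢
          rw [QuadraticMap.polar_add_right, ha, hb, add_zero]
        smul_mem' := by
          intro c z hz
          rw [Set.mem_setOf_eq] at hz ⊢
          rw [QuadraticMap.polar_smul_right, hz, smul_zero] }
    have hKt : Submodule.span K (↑t : Set W) = ⊤ := by
      refine top_unique ?_
      rw [← hNspan]
      refine Submodule.span_le.2 ?_
      rw [hNt]
      exact ospan_subset_spanK O _
    have hallZ : ∀ z : W, z ∈ Z := by
      have h1 : Submodule.span K (↑t : Set W) ≤ Z :=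
        Submodule.span_le.2 fun y hy => hzero y hy
      rw [hKt] at h1
      exact fun z => h1 trivial
    have := hQ' ((x₁ : W) - (x₂ : W)) fun y => hallZ y
    exact Subtype.ext (sub_eq_zero.1 this)
  haveI : IsNoetherian O ↥D := isNoetherian_of_injective ψ hinj
  -- pick a maximal integral lattice containing `P`
  obtain ⟨q₀, hq₀, hq₀max⟩ := (set_has_maximal_iff_noetherian.mpr inferInstance)
    {q : Submodule O ↥D | P ≤ Submodule.map D.subtype q ∧
      IsIntegral O Q' ↑(Submodule.map D.subtype q)}
    ⟨Submodule.comap D.subtype P, by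
      have hmc : Submodule.map D.subtype (Submodule.comap D.subtype P) = P := by
        rw [Submodule.map_comap_subtype, inf_eq_right.2 hPD]
      refine ⟨?_, ?_⟩
      · rw [hmc]
      · rw [hmc]; exact hPint⟩
  set p₀ : Submodule O W := Submodule.map D.subtype q₀ with hp₀
  have hPp₀ : P ≤ p₀ := hq₀.1
  have hint₀ : IsIntegral O Q' (↑p₀ : Set W) := hq₀.2
  have hfg : p₀.FG := Submodule.FG.map _ (IsNoetherian.noetherian q₀)
  -- the maximality property, at the level of submodules
  have hmaxgen : ∀ p : Submodule O W, p₀ ≤ p → IsIntegral O Q' ↑p → p = p₀ := by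
    intro p hle hint
    have hpD : p ≤ D := hsubD p (hPp₀.trans hle) hint
    have hmapq : Submodule.map D.subtype (Submodule.comap D.subtype p) = p := by
      rw [Submodule.map_comap_subtype, inf_eq_right.2 hpD]
    have hq₀q : q₀ ≤ Submodule.comap D.subtype p := by
      intro z hz
      exact Submodule.mem_comap.2 (hle (Submodule.mem_map_of_mem hz))
    have hnotlt := hq₀max (Submodule.comap D.subtype p)
      ⟨by rw [hmapq]; exact hPp₀.trans hle, by rw [hmapq]; exact hint⟩
    have heq : q₀ = Submodule.comap D.subtype p := by
      by_contra hne
      exact hnotlt (lt_of_le_of_ne hq₀q hne)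
    rw [← hmapq, ← heq]
  have hspan₀ : Submodule.span K (↑p₀ : Set W) = ⊤ := by
    refine top_unique ?_
    rw [← hNspan]
    refine Submodule.span_mono ?_
    rw [hNP]
    exact fun x hx => hPp₀ hx
  refine ⟨↑p₀, ⟨?_, hspan₀⟩, ⟨hint₀, ?_⟩, by rw [hNP]; exact fun x hx => hPp₀ hx⟩
  · obtain ⟨t₀, ht₀⟩ := hfg
    exact ⟨t₀, by rw [ospan_eq_span, ht₀]⟩
  · intro L' hL' _ hsub hintL'
    obtain ⟨t'', rfl⟩ := hL'
    rw [ospan_eq_span O (↑t'' : Set W)] at hsub hintL' ⊢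
    have hle : p₀ ≤ Submodule.span O (↑t'' : Set W) := hsub
    rw [hmaxgen _ hle hintL']

end Aux

end QLat

open QLat

/-- Let `F` be a non-archimedean local field of characteristic ≠ 2,
`n ≥ 1`, and `M` an integral `O_F`-lattice.  Then `M` is `n`-ADC if and only if for
every `O_F`-maximal lattice `N` of rank `n` such that `F·M` represents `F·N`, `M`
represents `N`. -/
theorem isADC_iff_represents_maximal
    {K : Type} [Field K] (O : ValuationSubring K)
    [IsDiscreteValuationRing O] [IsAdicComplete (IsLocalRing.maximalIdeal O) O]
    [Finite (IsLocalRing.ResidueField O)] (hK2 : (2 : K) ≠ 0)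
    {V : Type} [AddCommGroup V] [Module K V]
    (Q : QuadraticForm K V) (hQ : Nondeg Q)
    (n : ℕ) (hn : 1 ≤ n)
    (M : Set V) (hM : IsLatticeOn O.toSubring M) (hMint : IsIntegral O.toSubring Q M) :
    IsADC O.toSubring Q M n ↔
      ∀ (W : Type) [AddCommGroup W] [Module K W] (Q' : QuadraticForm K W),
        Nondeg Q' → Module.finrank K W = n →
        ∀ N : Set W, IsLatticeOn O.toSubring N → IsMaximal O.toSubring Q' N →
          SpaceRep Q' Q → LatRep Q' Q N M := by
  constructor
  · intro h W _ _ Q' hQ' hrk N hN hNmax hrep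
    exact h W Q' hQ' hrk N hN hNmax.1 hrep
  · intro h W _ _ Q' hQ' hrk N hN hNint hrep
    haveI : IsNoetherianRing O.toSubring := inferInstanceAs (IsNoetherianRing O)
    obtain ⟨L', hL'on, hL'max, hNL'⟩ :=
      exists_maximal_superlattice O.toSubring Q' hQ' hN hNint
    obtain ⟨σ, hinj, hform, himg⟩ := h W Q' hQ' hrk L' hL'on hL'max hrep
    exact ⟨σ, hinj, hform, (Set.image_mono (f := σ) hNL').trans himg⟩
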